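/- Let f ∈ (0,1], let k ≥ 1, and let b₁, b₂ ∈ {0,1}^k be two bit vectors each of Hamming weight exactly h. Then for every fixed outcome b' ∈ {0,1}^k, P_f(b' | b₁) ≤ ((1 − f/2)/(f/2))^{2h} · P_f(b' | b₂), i.e., the pointwise likelihood ratio of the Permanent randomized response for any two weight-h inputs is at most ((1 − f/2)/(f/2))^{2h}. -/

import Mathlib

/-- The Permanent randomized response probability: each bit of `b` is kept with
probability `1 - f` and replaced by a uniformly random bit with probability `f`,
so `P_f(b' | b) = ∏ i, ρ(b'_i, b_i)` with `ρ(1,1) = ρ(0,0) = 1 - f/2` and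
`ρ(1,0) = ρ(0,1) = f/2`. -/
noncomputable def permProb (f : ℝ) {k : ℕ} (b' b : Fin k → Bool) : ℝ :=
  ∏ i, if b' i = b i then 1 - f / 2 else f / 2

lemma permProb_eq (f : ℝ) {k : ℕ} (b' b : Fin k → Bool) :
    permProb f b' b = (1 - f / 2) ^ ((Finset.univ.filter (fun i => b' i = b i)).card)
      * (f / 2) ^ (k - (Finset.univ.filter (fun i => b' i = b i)).card) := by
  classical
  rw [permProb, Finset.prod_ite, Finset.prod_const, Finset.prod_const]
  congr 1
  congr 1
  have := Finset.card_filter_add_card_filter_not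
    (s := (Finset.univ : Finset (Fin k))) (p := fun i => b' i = b i)
  simp only [Finset.card_univ, Fintype.card_fin] at this
  omega

/-- The pointwise likelihood ratio of the Permanent randomized response for any two
weight-`h` inputs is at most `((1 − f/2)/(f/2))^(2h)`. -/
theorem permanent_rr_pointwise_ratio
    (f : ℝ) (hf0 : 0 < f) (hf1 : f ≤ 1)
    (k h : ℕ) (hk : 1 ≤ k)
    (b₁ b₂ : Fin k → Bool)
    (hb₁ : (Finset.univ.filter (fun i => b₁ i = true)).card = h)
    (hb₂ : (Finset.univ.filter (fun i => b₂ i = true)).card = h)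
    (b' : Fin k → Bool) :
    permProb f b' b₁ ≤ ((1 - f / 2) / (f / 2)) ^ (2 * h) * permProb f b' b₂ := by
  classical
  set q : ℝ := f / 2 with hq
  set p : ℝ := 1 - f / 2 with hp
  have hq0 : 0 < q := by simp only [hq]; linarith
  have hqp : q ≤ p := by simp only [hq, hp]; linarith
  have hp0 : 0 < p := lt_of_lt_of_le hq0 hqp
  set A₁ := Finset.univ.filter (fun i => b' i = b₁ i) with hA₁
  set A₂ := Finset.univ.filter (fun i => b' i = b₂ i) with hA₂
  have ha1k : A₁.card ≤ k := by
    simpa using Finset.card_filter_le (Finset.univ : Finset (Fin k)) _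
  have ha2k : A₂.card ≤ k := by
    simpa using Finset.card_filter_le (Finset.univ : Finset (Fin k)) _
  -- key counting inequality
  have key : A₁.card ≤ A₂.card + 2 * h := by
    have hsub : A₁ ⊆ A₂ ∪ (A₁ \ A₂) := by
      intro i hi
      by_cases h2 : i ∈ A₂
      · exact Finset.mem_union_left _ h2
      · exact Finset.mem_union_right _ (Finset.mem_sdiff.mpr ⟨hi, h2⟩)
    have hdiff : A₁ \ A₂ ⊆ (Finset.univ.filter (fun i => b₁ i = true)) ∪
        (Finset.univ.filter (fun i => b₂ i = true)) := by
      intro i hi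
      rw [Finset.mem_sdiff, hA₁, hA₂, Finset.mem_filter, Finset.mem_filter] at hi
      obtain ⟨⟨_, h1⟩, h2⟩ := hi
      simp only [Finset.mem_union, Finset.mem_filter, Finset.mem_univ, true_and]
      have hne : b₁ i ≠ b₂ i := by
        intro he; exact h2 ⟨Finset.mem_univ i, he ▸ h1⟩
      cases hb1 : b₁ i <;> cases hb2 : b₂ i <;> simp_all
    have hcd : (A₁ \ A₂).card ≤ 2 * h := by
      calc (A₁ \ A₂).card ≤ _ := Finset.card_le_card hdiff
        _ ≤ (Finset.univ.filter (fun i => b₁ i = true)).card +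
            (Finset.univ.filter (fun i => b₂ i = true)).card := Finset.card_union_le _ _
        _ = 2 * h := by rw [hb₁, hb₂]; ring
    calc A₁.card ≤ (A₂ ∪ (A₁ \ A₂)).card := Finset.card_le_card hsub
      _ ≤ A₂.card + (A₁ \ A₂).card := Finset.card_union_le _ _
      _ ≤ A₂.card + 2 * h := by omega
  -- rewrite permProb
  have rw1 : ∀ a : ℕ, a ≤ k → p ^ a * q ^ (k - a) = (p / q) ^ a * q ^ k := by
    intro a ha
    have hk' : q ^ k = q ^ a * q ^ (k - a) := by rw [← pow_add]; congr 1; omega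
    rw [hk', div_pow]
    field_simp
    rw [← mul_pow, div_mul_cancel₀ p hq0.ne']
  have e₁ : permProb f b' b₁ = (p / q) ^ A₁.card * q ^ k := by
    rw [permProb_eq, ← hA₁, ← hq, ← hp, rw1 _ ha1k]
  have e₂ : permProb f b' b₂ = (p / q) ^ A₂.card * q ^ k := by
    rw [permProb_eq, ← hA₂, ← hq, ← hp, rw1 _ ha2k]
  rw [e₁, e₂, ← mul_assoc, ← pow_add]
  have hr1 : (1 : ℝ) ≤ p / q := (one_le_div hq0).mpr hqp
  have hpow : (p / q) ^ A₁.card ≤ (p / q) ^ (2 * h + A₂.card) :=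
    pow_le_pow_right₀ hr1 (by omega)
  exact mul_le_mul_of_nonneg_right hpow (by positivity)
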